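/- Suppose v is a vertex in a forest F of order n. If ⌈(n+1)/(α_v+1)⌉ > 3, then deg(v) ≥ α_v + 4. -/
import Mathlib


open SimpleGraph Finset

variable {V : Type*}

/-- A stable (independent) set of vertices. -/
def IsStable (G : SimpleGraph V) (S : Finset V) : Prop :=
  ∀ x ∈ S, ∀ y ∈ S, ¬G.Adj x y

/-- Stability (independence) number. -/
noncomputable def stabNum (G : SimpleGraph V) [Fintype V] : ℕ :=
  sSup {n | ∃ S : Finset V, IsStable G S ∧ S.card = n}

/-- `x`-stability number: max size of a stable set containing `x`. -/
noncomputable def stabNumAt (G : SimpleGraph V) [Fintype V] (x : V) : ℕ :=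
  sSup {n | ∃ S : Finset V, IsStable G S ∧ x ∈ S ∧ S.card = n}

/-- Stability number of the subgraph induced on a vertex set `s`. -/
noncomputable def stabNumOn (G : SimpleGraph V) (s : Set V) : ℕ :=
  sSup {n | ∃ S : Finset V, ↑S ⊆ s ∧ IsStable G S ∧ S.card = n}

/-- `G` admits an equitable `k`-coloring. -/
def EquitablyColorable (G : SimpleGraph V) [Fintype V] (k : ℕ) : Prop :=
  ∃ c : V → Fin k, (∀ a b, G.Adj a b → c a ≠ c b) ∧
    ∀ i j : Fin k,
      (Finset.univ.filter fun v => c v = i).card ≤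
        (Finset.univ.filter fun v => c v = j).card + 1

/-- Equitable chromatic number. -/
noncomputable def eqChromNum (G : SimpleGraph V) [Fintype V] : ℕ :=
  sInf {k | EquitablyColorable G k}

/-- In an acyclic graph, every path realizes the distance. -/
lemma aux_path_length_eq_dist [DecidableEq V] {F : SimpleGraph V} (hF : F.IsAcyclic) {u w : V}
    (p : F.Walk u w) (hp : p.IsPath) : p.length = F.dist u w := by
  obtain ⟨q, hq⟩ := p.reachable.exists_walk_length_eq_dist
  have huniq := hF.path_unique ⟨p, hp⟩ q.toPath
  have hle : q.bypass.length ≤ q.length := q.length_bypass_le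
  have : p = q.bypass := congrArg Subtype.val huniq
  have h1 : p.length ≤ F.dist u w := by rw [this, ← hq]; exact hle
  exact le_antisymm h1 (SimpleGraph.dist_le p)

/-- In an acyclic graph, distances to adjacent vertices differ by exactly one. -/
lemma aux_adj_dist {F : SimpleGraph V} (hF : F.IsAcyclic) {r x y : V}
    (hr : F.Reachable r x) (ha : F.Adj x y) :
    F.dist r y = F.dist r x + 1 ∨ F.dist r x = F.dist r y + 1 := by
  classical
  obtain ⟨pw, hpw⟩ := hr.exists_walk_length_eq_dist
  have hry : F.Reachable r y := hr.trans ha.reachable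
  obtain ⟨qw, hqw⟩ := hry.exists_walk_length_eq_dist
  set p := pw.bypass with hpdef
  set q := qw.bypass with hqdef
  have hp : p.IsPath := pw.bypass_isPath
  have hq : q.IsPath := qw.bypass_isPath
  have hpl : p.length = F.dist r x := aux_path_length_eq_dist hF p hp
  have hql : q.length = F.dist r y := aux_path_length_eq_dist hF q hq
  by_cases hx : x ∈ q.support
  · left
    have ht : (q.takeUntil x hx).IsPath := hq.takeUntil hx
    have htl : (q.takeUntil x hx).length = F.dist r x :=
      aux_path_length_eq_dist hF _ ht
    have hspec := q.take_spec hx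
    have hlen : (q.takeUntil x hx).length + (q.dropUntil x hx).length = q.length := by
      have := congrArg SimpleGraph.Walk.length hspec
      rwa [SimpleGraph.Walk.length_append] at this
    have hd1 : 1 ≤ (q.dropUntil x hx).length := by
      by_contra hcon
      have h0 : (q.dropUntil x hx).length = 0 := by omega
      exact ha.ne (SimpleGraph.Walk.eq_of_length_eq_zero h0)
    have hub : F.dist r y ≤ F.dist r x + 1 := by
      have := SimpleGraph.dist_le (p.concat ha)
      rwa [SimpleGraph.Walk.length_concat, hpl] at this
    omega
  · right
    have hw : (q.concat ha.symm).IsPath := by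
      rw [← SimpleGraph.Walk.isPath_reverse_iff, SimpleGraph.Walk.reverse_concat]
      refine hq.reverse.cons ?_
      rwa [SimpleGraph.Walk.support_reverse, List.mem_reverse]
    have := aux_path_length_eq_dist hF _ hw
    rw [SimpleGraph.Walk.length_concat, hql] at this
    omega

/-- Any finite vertex set in a forest contains a stable subset of at least half its size. -/
lemma aux_exists_stable_half {F : SimpleGraph V} (hF : F.IsAcyclic) (A : Finset V) :
    ∃ S ⊆ A, IsStable F S ∧ A.card ≤ 2 * S.card := by
  classical
  set rt : V → V := fun w => (F.connectedComponentMk w).out with hrt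
  have hreach : ∀ w, F.Reachable (rt w) w := fun w =>
    SimpleGraph.ConnectedComponent.exact ((F.connectedComponentMk w).out_eq)
  have hrt_adj : ∀ {x y}, F.Adj x y → rt x = rt y := by
    intro x y hxy
    simp only [hrt]
    rw [SimpleGraph.ConnectedComponent.sound hxy.reachable]
  set Q : ℕ → Finset V := fun k => A.filter (fun w => F.dist (rt w) w % 2 = k) with hQ
  have hstable : ∀ k, IsStable F (Q k) := by
    intro k x hx y hy hxy
    simp only [hQ, Finset.mem_filter] at hx hy
    have hrxy := hrt_adj hxy
    have hd := aux_adj_dist hF (hreach x) hxy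
    rw [hrxy] at hd
    have hPx := hx.2
    have hPy := hy.2
    rw [hrxy] at hPx
    omega
  have hcard : (Q 0).card + (Q 1).card = A.card := by
    have h1 := Finset.card_filter_add_card_filter_not
      (s := A) (p := fun w => F.dist (rt w) w % 2 = 0)
    have h2 : A.filter (fun w => ¬ F.dist (rt w) w % 2 = 0) = Q 1 := by
      apply Finset.filter_congr
      intro w _
      constructor
      · intro hw; omega
      · intro hw; omega
    rw [h2] at h1
    exact h1
  rcases le_total (Q 0).card (Q 1).card with hle | hle
  · exact ⟨Q 1, Finset.filter_subset _ _, hstable 1, by omega⟩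
  · exact ⟨Q 0, Finset.filter_subset _ _, hstable 0, by omega⟩


theorem stmt6 [Fintype V] (F : SimpleGraph V) [DecidableRel F.Adj]
    (hF : F.IsAcyclic) (v : V)
    (h : 3 < ⌈((Fintype.card V : ℚ) + 1) / ((stabNumAt F v : ℚ) + 1)⌉) :
    F.degree v ≥ stabNumAt F v + 4 := by
  classical
  set α := stabNumAt F v with hα
  set A : Finset V := Finset.univ \ insert v (F.neighborFinset v) with hA
  obtain ⟨S, hSA, hstab, hhalf⟩ := aux_exists_stable_half hF A
  have hvS : v ∉ S := by
    intro hv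
    have := hSA hv
    simp [hA] at this
  have hSnon : ∀ y ∈ S, ¬ F.Adj v y := by
    intro y hy hadj
    have := hSA hy
    simp [hA, SimpleGraph.mem_neighborFinset] at this
    exact this.2 hadj
  have hstab' : IsStable F (insert v S) := by
    intro x hx y hy hxy
    rcases Finset.mem_insert.mp hx with hxv | hxS
    · rcases Finset.mem_insert.mp hy with hyv | hyS
      · subst hxv; subst hyv; exact F.irrefl hxy
      · subst hxv; exact hSnon y hyS hxy
    · rcases Finset.mem_insert.mp hy with hyv | hyS
      · subst hyv; exact hSnon x hxS hxy.symm
      · exact hstab x hxS y hyS hxy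
  have hmem : S.card + 1 ∈ {n | ∃ T : Finset V, IsStable F T ∧ v ∈ T ∧ T.card = n} :=
    ⟨insert v S, hstab', Finset.mem_insert_self v S, Finset.card_insert_of_notMem hvS⟩
  have hbdd : BddAbove {n | ∃ T : Finset V, IsStable F T ∧ v ∈ T ∧ T.card = n} := by
    refine ⟨Fintype.card V, ?_⟩
    rintro n ⟨T, -, -, rfl⟩
    exact Finset.card_le_univ T
  have hαge : S.card + 1 ≤ α := le_csSup hbdd hmem
  have hcardA : A.card + (F.degree v + 1) = Fintype.card V := by
    have hsub : insert v (F.neighborFinset v) ⊆ Finset.univ := Finset.subset_univ _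
    have hvN : v ∉ F.neighborFinset v := by simp [SimpleGraph.mem_neighborFinset]
    have hins : (insert v (F.neighborFinset v)).card = F.degree v + 1 := by
      rw [Finset.card_insert_of_notMem hvN, F.card_neighborFinset_eq_degree]
    have hle := Finset.card_le_card hsub
    rw [hA, Finset.card_sdiff_of_subset hsub, hins, Finset.card_univ]
    rw [hins, Finset.card_univ] at hle
    omega
  have hn : 3 * (α + 1) < Fintype.card V + 1 := by
    have h2 := Int.lt_ceil.mp h
    have hpos : (0 : ℚ) < (α : ℚ) + 1 := by positivity
    rw [lt_div_iff₀ hpos] at h2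
    have h3 : 3 * ((α : ℚ) + 1) < (Fintype.card V : ℚ) + 1 := by push_cast at h2 ⊢; linarith
    exact_mod_cast h3
  omega
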